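/- arXiv:1108.0894 — 5 statements merged into one kernel-verified Lean document; each statement's English description precedes it below -/
import Mathlib

section
/- In a tree, the family of vertex sets of paths satisfies the Helly property: if a finite family of paths in a tree pairwise intersect (share at least one vertex), then there is a vertex common to all of them. -/
open SimpleGraph

section Aux

variable {V : Type} [DecidableEq V] {G : SimpleGraph V}

/-- In a connected acyclic graph, any path has length equal to the distance. -/
lemma aux_path_length_eq_dist (hconn : G.Connected) (hacyc : G.IsAcyclic)
    {u v : V} (p : G.Walk u v) (hp : p.IsPath) : p.length = G.dist u v := by
  obtain ⟨w, hw⟩ := (hconn.preconnected u v).exists_walk_length_eq_dist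
  have hq : w.bypass.IsPath := w.bypass_isPath
  have h1 : w.bypass.length ≤ G.dist u v := hw ▸ w.length_bypass_le
  have h2 : G.dist u v ≤ w.bypass.length := SimpleGraph.dist_le _
  have heq := (isAcyclic_iff_path_unique.mp hacyc) ⟨p, hp⟩ ⟨w.bypass, hq⟩
  have hpw : p = w.bypass := congrArg Subtype.val heq
  rw [hpw]; omega

/-- Additivity of distance along a path, in a tree. -/
lemma aux_mem_support_dist (hconn : G.Connected) (hacyc : G.IsAcyclic)
    {u v x : V} (p : G.Walk u v) (hp : p.IsPath) (hx : x ∈ p.support) :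
    G.dist u x + G.dist x v = G.dist u v := by
  have hsplit := p.take_spec hx
  have h1 : (p.takeUntil x hx).length = G.dist u x :=
    aux_path_length_eq_dist hconn hacyc _ (hp.takeUntil hx)
  have h2 : (p.dropUntil x hx).length = G.dist x v :=
    aux_path_length_eq_dist hconn hacyc _ (hp.dropUntil hx)
  have h3 : p.length = G.dist u v := aux_path_length_eq_dist hconn hacyc _ hp
  have h4 : ((p.takeUntil x hx).append (p.dropUntil x hx)).length = p.length := by
    rw [hsplit]
  rw [SimpleGraph.Walk.length_append] at h4
  omega

/-- Convexity: between two vertices on a path there is a path inside its support. -/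
lemma aux_convex {u v x y : V} (p : G.Walk u v) (hp : p.IsPath)
    (hx : x ∈ p.support) (hy : y ∈ p.support) :
    ∃ q : G.Walk x y, q.IsPath ∧ ∀ z ∈ q.support, z ∈ p.support := by
  have hsplit := p.take_spec hx
  have hy' : y ∈ ((p.takeUntil x hx).append (p.dropUntil x hx)).support := by
    rw [hsplit]; exact hy
  rw [SimpleGraph.Walk.mem_support_append_iff] at hy'
  rcases hy' with hy1 | hy2
  · refine ⟨((p.takeUntil x hx).dropUntil y hy1).reverse,
      (((hp.takeUntil hx).dropUntil hy1)).reverse, fun z hz => ?_⟩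
    rw [SimpleGraph.Walk.support_reverse, List.mem_reverse] at hz
    exact p.support_takeUntil_subset hx
      ((p.takeUntil x hx).support_dropUntil_subset hy1 hz)
  · refine ⟨(p.dropUntil x hx).takeUntil y hy2,
      (hp.dropUntil hx).takeUntil hy2, fun z hz => ?_⟩
    exact p.support_dropUntil_subset hx
      ((p.dropUntil x hx).support_takeUntil_subset hy2 hz)

/-- Appending two paths that meet only at the joint gives a path. -/
lemma aux_append_isPath {u v x : V} (p : G.Walk u x) (q : G.Walk x v)
    (hp : p.IsPath) (hq : q.IsPath)
    (h : ∀ z, z ∈ p.support → z ∈ q.support → z = x) : (p.append q).IsPath := by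
  rw [SimpleGraph.Walk.isPath_def, SimpleGraph.Walk.support_append]
  have hqn := hq.support_nodup
  rw [q.support_eq_cons] at hqn
  refine List.Nodup.append hp.support_nodup hqn.of_cons ?_
  intro z hz1 hz2
  have hz2' : z ∈ q.support := by
    rw [q.support_eq_cons]; exact List.mem_cons_of_mem _ hz2
  have hzx := h z hz1 hz2'
  subst hzx
  exact (List.nodup_cons.mp hqn).1 hz2

end Aux

/-- Helly property for paths in a tree: if finitely many paths in a tree pairwise
share a vertex, then all of them share a common vertex. -/
theorem stmt_4 {V : Type} [Fintype V] (G : SimpleGraph V)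
    (hconn : G.Connected) (hacyc : G.IsAcyclic)
    {ι : Type} [Fintype ι] [Nonempty ι]
    (a b : ι → V) (P : ∀ i, G.Path (a i) (b i))
    (hpair : ∀ i j, ∃ v, v ∈ (P i).1.support ∧ v ∈ (P j).1.support) :
    ∃ v, ∀ i, v ∈ (P i).1.support := by
  classical
  set r : V := a (Classical.arbitrary ι) with hr
  -- choose the closest vertex to r on each path
  have hc : ∀ i : ι, ∃ c, c ∈ (P i).1.support ∧
      ∀ x ∈ (P i).1.support, G.dist r c ≤ G.dist r x := by
    intro i
    obtain ⟨c, hc1, hc2⟩ := ((P i).1.support.toFinset).exists_min_image (G.dist r)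
      ⟨a i, by simp [SimpleGraph.Walk.start_mem_support]⟩
    exact ⟨c, by simpa using hc1, fun x hx => hc2 x (by simpa using hx)⟩
  choose c hcmem hcmin using hc
  -- the gate property: the unique path from r to any w on P i passes through c i
  have gate : ∀ i (w : V), w ∈ (P i).1.support →
      ∃ (Q1 : G.Walk r (c i)) (Q2 : G.Walk (c i) w),
        (Q1.append Q2).IsPath ∧ Q1.IsPath ∧
        (∀ z ∈ Q2.support, z ∈ (P i).1.support) := by
    intro i w hw
    obtain ⟨w1⟩ := hconn.preconnected r (c i)
    obtain ⟨Q2, hQ2, hQ2sub⟩ := aux_convex (P i).1 (P i).2 (hcmem i) hw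
    refine ⟨w1.bypass, Q2, ?_, w1.bypass_isPath, hQ2sub⟩
    apply aux_append_isPath _ _ w1.bypass_isPath hQ2
    intro z hz1 hz2
    have h1 : G.dist r z + G.dist z (c i) = G.dist r (c i) :=
      aux_mem_support_dist hconn hacyc _ w1.bypass_isPath hz1
    have h2 : G.dist r (c i) ≤ G.dist r z := hcmin i z (hQ2sub z hz2)
    have h3 : G.dist z (c i) = 0 := by omega
    have h4 : (w1.bypass.dropUntil z hz1).length = G.dist z (c i) :=
      aux_path_length_eq_dist hconn hacyc _ (w1.bypass_isPath.dropUntil hz1)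
    exact SimpleGraph.Walk.eq_of_length_eq_zero (p := w1.bypass.dropUntil z hz1) (by omega)
  -- choose the index maximizing the distance of the gate from r
  obtain ⟨k, -, hk⟩ := Finset.univ.exists_max_image (fun i => G.dist r (c i))
    Finset.univ_nonempty
  refine ⟨c k, fun j => ?_⟩
  obtain ⟨w, hwk, hwj⟩ := hpair k j
  obtain ⟨Qk1, Qk2, hQk, hQk1, hQk2sub⟩ := gate k w hwk
  obtain ⟨Qj1, Qj2, hQj, hQj1, hQj2sub⟩ := gate j w hwj
  have heq := (isAcyclic_iff_path_unique.mp hacyc) ⟨Qk1.append Qk2, hQk⟩ ⟨Qj1.append Qj2, hQj⟩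
  have heq' : Qk1.append Qk2 = Qj1.append Qj2 := congrArg Subtype.val heq
  have hckmem : c k ∈ (Qj1.append Qj2).support := by
    rw [← heq', SimpleGraph.Walk.mem_support_append_iff]
    exact Or.inl (SimpleGraph.Walk.end_mem_support _)
  rw [SimpleGraph.Walk.mem_support_append_iff] at hckmem
  rcases hckmem with h1 | h2
  · -- c k lies on the path from r to c j, forcing c k = c j
    have hadd : G.dist r (c k) + G.dist (c k) (c j) = G.dist r (c j) :=
      aux_mem_support_dist hconn hacyc _ hQj1 h1
    have hle : G.dist r (c j) ≤ G.dist r (c k) := hk j (Finset.mem_univ j)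
    have h3 : G.dist (c k) (c j) = 0 := by omega
    have h4 : (Qj1.dropUntil (c k) h1).length = G.dist (c k) (c j) :=
      aux_path_length_eq_dist hconn hacyc _ (hQj1.dropUntil h1)
    have : c k = c j := SimpleGraph.Walk.eq_of_length_eq_zero (p := Qj1.dropUntil (c k) h1) (by omega)
    rw [this]; exact hcmem j
  · exact hQj2sub _ h2
end

section
/- Let C be an optimal solution to the submodular-cost set cover formulation of the min-error Bridges problem (a set of kill moves and open-bridge moves covering every claw). Then the bridge solution that opens exactly the bridges of the chosen open-bridge moves has total error FP + FN at most cost(C): the weight of bads succeeding is at most the open-bridge-move cost, and every failed good's weight is accounted for by a kill move. -/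
open scoped Classical

/-- If `C` (a set of kill moves and open-bridge moves) covers every claw, then the bridge
solution opening exactly the bridges of `C` has total error FP + FN at most cost(C). -/
theorem stmt_10 {G D B : Type} [Fintype G] [Fintype D] [DecidableEq G] [DecidableEq B]
    (σg : G → Finset B) (σb : D → Finset B)
    (wG : G → ℝ) (wD : D → ℝ) (hwG : ∀ g, 0 ≤ wG g) (hwD : ∀ b, 0 ≤ wD b)
    (C : Finset (G ⊕ B))
    (hcover : ∀ g : G, Sum.inl g ∈ C ∨ ∃ s ∈ σg g, Sum.inr s ∈ C)
    (O : Finset B) (hO : ∀ s, s ∈ O ↔ Sum.inr s ∈ C) :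
    (∑ g ∈ Finset.univ.filter (fun g : G => σg g ∩ O = ∅), wG g) +
      (∑ b ∈ Finset.univ.filter (fun b : D => (σb b ∩ O).Nonempty), wD b) ≤
    (∑ g ∈ Finset.univ.filter (fun g : G => Sum.inl g ∈ C), wG g) +
      (∑ b ∈ Finset.univ.filter (fun b : D => ∃ s ∈ σb b, Sum.inr s ∈ C), wD b) := by
  have hbad : (Finset.univ.filter (fun b : D => (σb b ∩ O).Nonempty)) =
      (Finset.univ.filter (fun b : D => ∃ s ∈ σb b, Sum.inr s ∈ C)) := by
    apply Finset.filter_congr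
    intro b _
    constructor
    · rintro ⟨s, hs⟩
      rw [Finset.mem_inter] at hs
      exact ⟨s, hs.1, (hO s).mp hs.2⟩
    · rintro ⟨s, hs1, hs2⟩
      exact ⟨s, Finset.mem_inter.mpr ⟨hs1, (hO s).mpr hs2⟩⟩
  rw [hbad]
  apply add_le_add_left
  apply Finset.sum_le_sum_of_subset_of_nonneg
  · intro g hg
    simp only [Finset.mem_filter, Finset.mem_univ, true_and] at hg ⊢
    rcases hcover g with h | ⟨s, hs1, hs2⟩
    · exact h
    · exfalso
      have : s ∈ σg g ∩ O := Finset.mem_inter.mpr ⟨hs1, (hO s).mpr hs2⟩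
      rw [hg] at this
      exact absurd this (Finset.notMem_empty s)
  · intro g _ _; exact hwG g
end

section
/- With the same construction, if S ⊆ V with |S| = B is NOT a vertex cover of G, then the capture probability is strictly less than (B + (n − B)/2)/n. Consequently, G has a vertex cover of size at most B iff some size-B sensor set achieves capture probability at least (n + B)/(2n). -/
/-- Vertex-cover reduction, hard direction: with capture probabilities `Q S` for each
sensor set `S` (harmonic off `S`, equal to 1 on `S`), any size-`B` set `S` that is not a
vertex cover achieves capture probability strictly below `(n + B)/(2n)`. Consequently,
`G` has a vertex cover of size at most `B` iff some size-`B` sensor set achieves capture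
probability at least `(n + B)/(2n)`. -/
theorem stmt_12 {V : Type} [Fintype V] [DecidableEq V] (G : SimpleGraph V)
    [DecidableRel G.Adj] (n : ℕ) (hn : n = Fintype.card V) (hn0 : 0 < n)
    (hdeg : ∀ v, 0 < G.degree v) (B : ℕ) (hB : B ≤ n)
    (Q : Finset V → V → ℝ)
    (hQ0 : ∀ S v, 0 ≤ Q S v) (hQ1 : ∀ S v, Q S v ≤ 1)
    (hQS : ∀ S, ∀ v ∈ S, Q S v = 1)
    (hQN : ∀ S, ∀ v ∉ S, Q S v = (∑ u ∈ G.neighborFinset v, Q S u) / (2 * G.degree v)) :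
    (∀ S : Finset V, S.card = B → (∃ u v, G.Adj u v ∧ u ∉ S ∧ v ∉ S) →
      (∑ v, Q S v) / n < ((n : ℝ) + B) / (2 * n)) ∧
    ((∃ C : Finset V, C.card ≤ B ∧ ∀ u v, G.Adj u v → u ∈ C ∨ v ∈ C) ↔
      (∃ S : Finset V, S.card = B ∧ ((n : ℝ) + B) / (2 * n) ≤ (∑ v, Q S v) / n)) := by
  have hnR : (0:ℝ) < n := by exact_mod_cast hn0
  have hhalf : ∀ S : Finset V, ∀ v ∉ S, Q S v ≤ 1/2 := by
    intro S v hv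
    rw [hQN S v hv]
    have hd : (0:ℝ) < G.degree v := by exact_mod_cast hdeg v
    rw [div_le_iff₀ (by positivity)]
    calc ∑ u ∈ G.neighborFinset v, Q S u ≤ ∑ u ∈ G.neighborFinset v, 1 :=
          Finset.sum_le_sum fun u _ => hQ1 S u
      _ = (G.degree v : ℝ) := by
          rw [Finset.sum_const, G.card_neighborFinset_eq_degree]; simp
      _ = 1/2 * (2 * G.degree v) := by ring
  have hstrict : ∀ S : Finset V, ∀ u v, G.Adj u v → u ∉ S → v ∉ S → Q S u < 1/2 := by
    intro S u v huv hu hv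
    rw [hQN S u hu]
    have hd : (0:ℝ) < G.degree u := by exact_mod_cast hdeg u
    rw [div_lt_iff₀ (by positivity)]
    have hvmem : v ∈ G.neighborFinset u := by simpa using huv
    calc ∑ w ∈ G.neighborFinset u, Q S w < ∑ w ∈ G.neighborFinset u, 1 := by
          refine Finset.sum_lt_sum (fun w _ => hQ1 S w) ⟨v, hvmem, ?_⟩
          exact lt_of_le_of_lt (hhalf S v hv) (by norm_num)
      _ = (G.degree u : ℝ) := by
          rw [Finset.sum_const, G.card_neighborFinset_eq_degree]; simp
      _ = 1/2 * (2 * G.degree u) := by ring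
  have hsplit : ∀ S : Finset V, (∑ v, Q S v) = S.card + ∑ v ∈ Sᶜ, Q S v := by
    intro S
    rw [← Finset.sum_add_sum_compl S (Q S)]
    congr 1
    rw [Finset.sum_congr rfl (fun v hv => hQS S v hv), Finset.sum_const]; simp
  have hcardc : ∀ S : Finset V, S.card = B → ((Sᶜ : Finset V).card : ℝ) = (n : ℝ) - B := by
    intro S hS
    rw [Finset.card_compl, hS, ← hn]
    push_cast [Nat.cast_sub hB]
    ring
  have part1 : ∀ S : Finset V, S.card = B → (∃ u v, G.Adj u v ∧ u ∉ S ∧ v ∉ S) →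
      (∑ v, Q S v) / n < ((n : ℝ) + B) / (2 * n) := by
    intro S hS ⟨u, v, huv, hu, hv⟩
    have hsum : (∑ v, Q S v) < ((n:ℝ) + B) / 2 := by
      rw [hsplit S, hS]
      have h1 : ∑ w ∈ Sᶜ, Q S w < ∑ w ∈ Sᶜ, (1/2 : ℝ) := by
        refine Finset.sum_lt_sum (fun w hw => hhalf S w (Finset.mem_compl.mp hw)) ?_
        exact ⟨u, Finset.mem_compl.mpr hu, hstrict S u v huv hu hv⟩
      have h2 : ∑ w ∈ Sᶜ, (1/2 : ℝ) = ((n:ℝ) - B) * (1/2) := by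
        rw [Finset.sum_const, nsmul_eq_mul, hcardc S hS]
      have : (B:ℝ) + ((n:ℝ) - B) * (1/2) = ((n:ℝ) + B) / 2 := by ring
      linarith
    calc (∑ v, Q S v) / n < (((n:ℝ) + B) / 2) / n := by gcongr
      _ = ((n:ℝ) + B) / (2 * n) := by rw [div_div]
  refine ⟨part1, ?_, ?_⟩
  · rintro ⟨C, hC, hcov⟩
    obtain ⟨S, hCS, _, hScard⟩ := Finset.exists_subsuperset_card_eq (Finset.subset_univ C)
      hC (by rw [Finset.card_univ, ← hn]; exact hB)
    refine ⟨S, hScard, le_of_eq ?_⟩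
    have hhalfeq : ∀ w ∈ Sᶜ, Q S w = 1/2 := by
      intro w hw
      have hwS : w ∉ S := Finset.mem_compl.mp hw
      rw [hQN S w hwS]
      have hall : ∀ u ∈ G.neighborFinset w, Q S u = 1 := by
        intro u hu
        apply hQS
        rcases hcov w u ((G.mem_neighborFinset w u).mp hu) with h | h
        · exact absurd (hCS h) hwS
        · exact hCS h
      rw [Finset.sum_congr rfl hall, Finset.sum_const, G.card_neighborFinset_eq_degree]
      have hd : (0:ℝ) < G.degree w := by exact_mod_cast hdeg w
      field_simp
      ring
    have : (∑ v, Q S v) = ((n:ℝ) + B) / 2 := by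
      rw [hsplit S, hScard, Finset.sum_congr rfl hhalfeq, Finset.sum_const,
        nsmul_eq_mul, hcardc S hScard]
      ring
    rw [this, div_div]
  · rintro ⟨S, hScard, hge⟩
    refine ⟨S, le_of_eq hScard, ?_⟩
    by_contra hbad
    push_neg at hbad
    obtain ⟨u, v, huv, hu, hv⟩ := hbad
    exact absurd hge (not_le.mpr (part1 S hScard ⟨u, v, huv, hu, hv⟩))
end

section
/- In the reduction from Maximum Independent Set to the net-flow Bridges problem (each vertex v becomes a bridge with max(deg(v) − 1, 0) bads crossing only it and, if deg(v)=0, one good; each edge (u,v) becomes a good who can cross bridges u and v; all weights 1), if S is an independent set in G then opening exactly the bridges corresponding to S yields net flow TN − FN equal to |S|. -/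
open scoped Classical

/-- MIS-to-Bridges reduction: each vertex `v` becomes a bridge with `deg v − 1` unit bads
(only crossing it), isolated vertices get one unit good, and each edge becomes a unit
good crossing its two bridges. Opening exactly the bridges of an independent set `S`
yields net flow `TN − FN = |S|`. -/
theorem stmt_17 {V : Type} [Fintype V] [DecidableEq V] (G : SimpleGraph V)
    [DecidableRel G.Adj] (S : Finset V)
    (hind : ∀ u ∈ S, ∀ v ∈ S, ¬ G.Adj u v) :
    (((G.edgeFinset.filter (fun e => ∃ v ∈ S, v ∈ e)).card : ℤ) +
        ((S.filter (fun v => G.degree v = 0)).card : ℤ)) -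
      (∑ v ∈ S.filter (fun v => 0 < G.degree v), ((G.degree v : ℤ) - 1)) =
    (S.card : ℤ) := by
  classical
  -- The filtered edge set is a disjoint union of incidence sets over S.
  have hbi : G.edgeFinset.filter (fun e => ∃ v ∈ S, v ∈ e)
      = S.biUnion (fun v => G.incidenceFinset v) := by
    ext e
    simp only [Finset.mem_filter, Finset.mem_biUnion, SimpleGraph.incidenceFinset_eq_filter]
    constructor
    · rintro ⟨he, v, hv, hve⟩; exact ⟨v, hv, he, hve⟩
    · rintro ⟨v, hv, he, hve⟩; exact ⟨he, v, hv, hve⟩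
  have hdisj : ∀ u ∈ S, ∀ v ∈ S, u ≠ v →
      Disjoint (G.incidenceFinset u) (G.incidenceFinset v) := by
    intro u hu v hv huv
    rw [Finset.disjoint_left]
    intro e heu hev
    rw [SimpleGraph.mem_incidenceFinset] at heu hev
    exact hind u hu v hv (G.adj_of_mem_incidenceSet huv heu hev)
  have hcard : (G.edgeFinset.filter (fun e => ∃ v ∈ S, v ∈ e)).card
      = ∑ v ∈ S, G.degree v := by
    rw [hbi, Finset.card_biUnion hdisj]
    exact Finset.sum_congr rfl fun v _ => G.card_incidenceFinset_eq_degree v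
  have hsplit : ∑ v ∈ S, (G.degree v : ℤ)
      = ∑ v ∈ S.filter (fun v => 0 < G.degree v), (G.degree v : ℤ) := by
    rw [Finset.sum_filter_of_ne]
    intro v _ h
    omega
  have hScard : (S.filter (fun v => 0 < G.degree v)).card
      + (S.filter (fun v => G.degree v = 0)).card = S.card := by
    have h := Finset.card_filter_add_card_filter_not (s := S)
      (p := fun v => 0 < G.degree v)
    have heq : S.filter (fun v => ¬ 0 < G.degree v) = S.filter (fun v => G.degree v = 0) := by
      apply Finset.filter_congr
      intro v _
      constructor <;> omega
    rw [heq] at h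
    exact h
  have hsum : ∑ v ∈ S.filter (fun v => 0 < G.degree v), ((G.degree v : ℤ) - 1)
      = (∑ v ∈ S.filter (fun v => 0 < G.degree v), (G.degree v : ℤ))
        - (S.filter (fun v => 0 < G.degree v)).card := by
    rw [Finset.sum_sub_distrib]
    simp
  rw [hcard, hsum]
  push_cast
  rw [hsplit]
  have := hScard
  omega
end

section
/- In the same MIS-to-Bridges reduction, any single open bridge contributes net flow at most 1: for bridge v with deg(v) ≥ 1, at most deg(v) goods can use it while exactly deg(v) − 1 bads do, and two open bridges each achieve contribution exactly 1 only if the corresponding vertices are non-adjacent (since a good corresponding to a shared edge can be counted for only one of them). Hence an integral net-flow solution of value k yields an independent set of size k in G. -/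
open scoped Classical

private def nf {V : Type} [Fintype V] [DecidableEq V] (G : SimpleGraph V)
    [DecidableRel G.Adj] (O : Finset V) : ℤ :=
  (((G.edgeFinset.filter (fun e => ∃ v ∈ O, v ∈ e)).card : ℤ) +
      ((O.filter (fun v => G.degree v = 0)).card : ℤ)) -
    (∑ v ∈ O.filter (fun v => 0 < G.degree v), ((G.degree v : ℤ) - 1))

private lemma nf_le_card {V : Type} [Fintype V] [DecidableEq V] (G : SimpleGraph V)
    [DecidableRel G.Adj] (O : Finset V) : nf G O ≤ O.card := by
  classical
  have hsub : G.edgeFinset.filter (fun e => ∃ v ∈ O, v ∈ e) ⊆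
      (O.filter (fun v => 0 < G.degree v)).biUnion (fun v => G.incidenceFinset v) := by
    intro e he
    simp only [Finset.mem_filter, SimpleGraph.mem_edgeFinset] at he
    obtain ⟨heE, v, hvO, hve⟩ := he
    have hinc : e ∈ G.incidenceFinset v := by
      rw [SimpleGraph.mem_incidenceFinset]
      exact ⟨heE, hve⟩
    have hdeg : 0 < G.degree v := by
      rw [← SimpleGraph.card_incidenceFinset_eq_degree]
      exact Finset.card_pos.2 ⟨e, hinc⟩
    exact Finset.mem_biUnion.2 ⟨v, Finset.mem_filter.2 ⟨hvO, hdeg⟩, hinc⟩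
  have hE : (G.edgeFinset.filter (fun e => ∃ v ∈ O, v ∈ e)).card ≤
      ∑ v ∈ O.filter (fun v => 0 < G.degree v), G.degree v := by
    calc _ ≤ ((O.filter (fun v => 0 < G.degree v)).biUnion (fun v => G.incidenceFinset v)).card :=
          Finset.card_le_card hsub
      _ ≤ ∑ v ∈ O.filter (fun v => 0 < G.degree v), (G.incidenceFinset v).card :=
          Finset.card_biUnion_le
      _ = _ := by
          refine Finset.sum_congr rfl fun v _ => ?_
          exact SimpleGraph.card_incidenceFinset_eq_degree G v
  have hpart : (O.filter (fun v => G.degree v = 0)).card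
      + (O.filter (fun v => 0 < G.degree v)).card = O.card := by
    have : O.filter (fun v => 0 < G.degree v) = O.filter (fun v => ¬ (G.degree v = 0)) := by
      apply Finset.filter_congr; intro v _; simp [Nat.pos_iff_ne_zero]
    rw [this]
    exact Finset.card_filter_add_card_filter_not _
  unfold nf
  have h1 : (∑ v ∈ O.filter (fun v => 0 < G.degree v), ((G.degree v : ℤ) - 1))
      = (∑ v ∈ O.filter (fun v => 0 < G.degree v), (G.degree v : ℤ))
        - (O.filter (fun v => 0 < G.degree v)).card := by
    rw [Finset.sum_sub_distrib]; simp
  have h2 : ((G.edgeFinset.filter (fun e => ∃ v ∈ O, v ∈ e)).card : ℤ)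
      ≤ ∑ v ∈ O.filter (fun v => 0 < G.degree v), (G.degree v : ℤ) := by
    exact_mod_cast hE
  have h3 : ((O.filter (fun v => G.degree v = 0)).card : ℤ)
      + ((O.filter (fun v => 0 < G.degree v)).card : ℤ) = O.card := by exact_mod_cast hpart
  linarith

private lemma nf_step {V : Type} [Fintype V] [DecidableEq V] (G : SimpleGraph V)
    [DecidableRel G.Adj] {O : Finset V} {u w : V} (hu : u ∈ O) (hw : w ∈ O)
    (hadj : G.Adj u w) : nf G O ≤ nf G (O.erase u) := by
  classical
  have hne : u ≠ w := G.ne_of_adj hadj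
  have hdeg : 0 < G.degree u := by
    rw [← SimpleGraph.card_neighborFinset_eq_degree]
    exact Finset.card_pos.2 ⟨w, by simp [hadj]⟩
  have hwO' : w ∈ O.erase u := Finset.mem_erase.2 ⟨hne.symm, hw⟩
  -- goods bound
  have hsub : G.edgeFinset.filter (fun e => ∃ v ∈ O, v ∈ e) ⊆
      (G.edgeFinset.filter (fun e => ∃ v ∈ O.erase u, v ∈ e))
        ∪ (G.incidenceFinset u).erase (s(u, w)) := by
    intro e he
    simp only [Finset.mem_filter, SimpleGraph.mem_edgeFinset] at he
    obtain ⟨heE, v, hvO, hve⟩ := he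
    by_cases hcase : ∃ x ∈ O.erase u, x ∈ e
    · exact Finset.mem_union_left _ (Finset.mem_filter.2 ⟨by simpa using heE, hcase⟩)
    · push_neg at hcase
      have hvu : v = u := by
        by_contra hvu
        exact hcase v (Finset.mem_erase.2 ⟨hvu, hvO⟩) hve
      subst hvu
      refine Finset.mem_union_right _ (Finset.mem_erase.2 ⟨?_, ?_⟩)
      · intro heq
        exact hcase w hwO' (by rw [heq]; simp)
      · rw [SimpleGraph.mem_incidenceFinset]; exact ⟨heE, hve⟩
  have hmem : s(u, w) ∈ G.incidenceFinset u := by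
    rw [SimpleGraph.mem_incidenceFinset]
    exact ⟨hadj, by simp⟩
  have hcardE : ((G.incidenceFinset u).erase (s(u, w))).card = G.degree u - 1 := by
    rw [Finset.card_erase_of_mem hmem, SimpleGraph.card_incidenceFinset_eq_degree]
  have hgoods : (G.edgeFinset.filter (fun e => ∃ v ∈ O, v ∈ e)).card
      ≤ (G.edgeFinset.filter (fun e => ∃ v ∈ O.erase u, v ∈ e)).card + (G.degree u - 1) := by
    calc _ ≤ _ := Finset.card_le_card hsub
      _ ≤ _ := Finset.card_union_le _ _
      _ = _ := by rw [hcardE]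
  -- isolated part unchanged
  have hiso : (O.erase u).filter (fun v => G.degree v = 0)
      = O.filter (fun v => G.degree v = 0) := by
    rw [Finset.filter_erase, Finset.erase_eq_of_notMem]
    simp only [Finset.mem_filter, not_and]
    intro _
    omega
  -- bads
  have huP : u ∈ O.filter (fun v => 0 < G.degree v) := Finset.mem_filter.2 ⟨hu, hdeg⟩
  have hbads : (∑ v ∈ (O.erase u).filter (fun v => 0 < G.degree v), ((G.degree v : ℤ) - 1))
      + ((G.degree u : ℤ) - 1)
      = ∑ v ∈ O.filter (fun v => 0 < G.degree v), ((G.degree v : ℤ) - 1) := by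
    rw [Finset.filter_erase]
    exact Finset.sum_erase_add _ _ huP
  have hcast : ((G.edgeFinset.filter (fun e => ∃ v ∈ O, v ∈ e)).card : ℤ)
      ≤ ((G.edgeFinset.filter (fun e => ∃ v ∈ O.erase u, v ∈ e)).card : ℤ)
        + ((G.degree u : ℤ) - 1) := by
    have := hgoods
    have h1 : ((G.degree u - 1 : ℕ) : ℤ) = (G.degree u : ℤ) - 1 := by
      omega
    calc ((G.edgeFinset.filter (fun e => ∃ v ∈ O, v ∈ e)).card : ℤ)
        ≤ (((G.edgeFinset.filter (fun e => ∃ v ∈ O.erase u, v ∈ e)).card + (G.degree u - 1) : ℕ) : ℤ) := by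
          exact_mod_cast this
      _ = _ := by push_cast; omega
  unfold nf
  rw [hiso]
  linarith

private lemma nf_indep {V : Type} [Fintype V] [DecidableEq V] (G : SimpleGraph V)
    [DecidableRel G.Adj] (O : Finset V) :
    ∃ S : Finset V, (∀ u ∈ S, ∀ w ∈ S, ¬ G.Adj u w) ∧ nf G O ≤ nf G S := by
  classical
  induction O using Finset.strongInduction with
  | _ O ih =>
    by_cases h : ∀ u ∈ O, ∀ w ∈ O, ¬ G.Adj u w
    · exact ⟨O, h, le_refl _⟩
    · push_neg at h
      obtain ⟨u, hu, w, hw, hadj⟩ := h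
      obtain ⟨S, hS, hle⟩ := ih (O.erase u) (Finset.erase_ssubset hu)
      exact ⟨S, hS, (nf_step G hu hw hadj).trans hle⟩

/-- MIS-to-Bridges reduction, converse direction. With net flow of an open bridge set `O`
given by `TN − FN` (goods: one per edge touching `O`, plus isolated open vertices; bads:
`deg v − 1` per open vertex of positive degree): a single open bridge of positive degree
contributes at most 1, and any open set of net flow at least `k` yields an independent
set of size at least `k`. -/
theorem stmt_18 {V : Type} [Fintype V] [DecidableEq V] (G : SimpleGraph V)
    [DecidableRel G.Adj]
    (netflow : Finset V → ℤ)
    (hnet : ∀ O : Finset V, netflow O =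
      (((G.edgeFinset.filter (fun e => ∃ v ∈ O, v ∈ e)).card : ℤ) +
          ((O.filter (fun v => G.degree v = 0)).card : ℤ)) -
        (∑ v ∈ O.filter (fun v => 0 < G.degree v), ((G.degree v : ℤ) - 1))) :
    (∀ v : V, 0 < G.degree v → netflow {v} ≤ 1) ∧
    (∀ (O : Finset V) (k : ℕ), (k : ℤ) ≤ netflow O →
      ∃ S : Finset V, (∀ u ∈ S, ∀ w ∈ S, ¬ G.Adj u w) ∧ k ≤ S.card) := by
  have hnf : ∀ O, netflow O = nf G O := fun O => hnet O
  constructor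
  · intro v _
    rw [hnf]
    have := nf_le_card G {v}
    simpa using this
  · intro O k hk
    obtain ⟨S, hS, hle⟩ := nf_indep G O
    refine ⟨S, hS, ?_⟩
    have : (k : ℤ) ≤ S.card := le_trans hk (by rw [hnf]; exact hle.trans (nf_le_card G S))
    exact_mod_cast this
end
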